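/- With R1, R2, Θ independent, R1 ~ μ_{λ1,c1}, R2 ~ μ_{λ2,c2}, Θ uniform on (0, π), and ρ = √(R1² + R2² − 2·R1·R2·cos Θ), for every r with c2·t < r ≤ (c1 + c2)·t the joint probability P(ρ < r, R1 < c1·t, R2 = c2·t) equals e^{−λ2t}·[1 − exp(−λ1t + (λ1/c1)·√(c1²t² − (r − c2t)²))] + (λ1·e^{−(λ1+λ2)t}/(π·c1)) · ∫_{r−c2t}^{β(r)} arccos((ξ² + (c2t)² − r²)/(2·c2t·ξ)) · ξ·(c1²t² − ξ²)^{−1/2} · exp((λ1/c1)·√(c1²t² − ξ²)) dξ, where β(r) = min{c2t + r, c1t}. -/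

import Mathlib

open MeasureTheory ProbabilityTheory

set_option maxHeartbeats 1000000

/-- Density of the absolutely continuous part of the law of the distance from
the origin of a planar Markov random flight with speed `c` and rate `lam` at time `t`. -/
noncomputable def fac (t lam c z : ℝ) : ℝ :=
  if 0 < z ∧ z < c * t then
    (lam / c) * z / Real.sqrt (c ^ 2 * t ^ 2 - z ^ 2) *
      Real.exp (-(lam * t) + (lam / c) * Real.sqrt (c ^ 2 * t ^ 2 - z ^ 2))
  else 0

/-- The law of the distance from the origin of a planar Markov random flight:
singular part `e^{-λt}·δ_{ct}` plus absolutely continuous part with density `fac`. -/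
noncomputable def flightLaw (t lam c : ℝ) : Measure ℝ :=
  ENNReal.ofReal (Real.exp (-(lam * t))) • Measure.dirac (c * t) +
    volume.withDensity fun z => ENNReal.ofReal (fac t lam c z)

/-- The uniform probability measure on a set `s ⊆ ℝ`. -/
noncomputable def uniformMeasure (s : Set ℝ) : Measure ℝ :=
  (volume s)⁻¹ • volume.restrict s

/-- The Euclidean distance between the two flights, expressed through the radii
`R1, R2` and the angle `Θ` via the law of cosines. -/
noncomputable def rho {Ω : Type*} (R1 R2 Θ : Ω → ℝ) (ω : Ω) : ℝ :=
  Real.sqrt (R1 ω ^ 2 + R2 ω ^ 2 - 2 * R1 ω * R2 ω * Real.cos (Θ ω))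

noncomputable def facAux (t lam c z : ℝ) : ℝ :=
  (lam / c) * z / Real.sqrt (c ^ 2 * t ^ 2 - z ^ 2) *
      Real.exp (-(lam * t) + (lam / c) * Real.sqrt (c ^ 2 * t ^ 2 - z ^ 2))

lemma fac_eq_indicator (t lam c : ℝ) :
    fac t lam c = (Set.Ioo 0 (c * t)).indicator (facAux t lam c) := by
  funext z
  simp [fac, facAux, Set.indicator_apply, Set.mem_Ioo]

lemma measurable_facAux (t lam c : ℝ) : Measurable (facAux t lam c) := by
  unfold facAux
  fun_prop

lemma measurable_fac (t lam c : ℝ) : Measurable (fac t lam c) := by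
  rw [fac_eq_indicator]
  exact (measurable_facAux t lam c).indicator measurableSet_Ioo

lemma fac_nonneg (t : ℝ) {lam c : ℝ} (hl : 0 < lam) (hc : 0 < c) (z : ℝ) :
    0 ≤ fac t lam c z := by
  unfold fac
  split_ifs with h
  · have h1 := h.1
    positivity
  · exact le_refl _

lemma cosSet_eq (u : ℝ) :
    Set.Ioo 0 Real.pi ∩ {θ : ℝ | u < Real.cos θ} = Set.Ioo 0 (Real.arccos u) := by
  ext θ
  simp only [Set.mem_inter_iff, Set.mem_Ioo, Set.mem_setOf_eq]
  constructor
  · rintro ⟨⟨h0, hπ⟩, hu⟩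
    refine ⟨h0, ?_⟩
    rcases lt_or_ge 1 u with h1 | h1
    · exact absurd (hu.trans_le (Real.cos_le_one θ)) (by linarith)
    rcases lt_or_ge u (-1) with hm | hm
    · rw [Real.arccos_eq_pi.mpr hm.le]; exact hπ
    by_contra h
    push_neg at h
    have hc := Real.cos_arccos hm h1
    have : Real.cos θ ≤ Real.cos (Real.arccos u) :=
      Real.strictAntiOn_cos.antitoneOn ⟨Real.arccos_nonneg u, Real.arccos_le_pi u⟩
        ⟨h0.le, hπ.le⟩ h
    rw [hc] at this
    linarith
  · rintro ⟨h0, hA⟩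
    refine ⟨⟨h0, hA.trans_le (Real.arccos_le_pi u)⟩, ?_⟩
    rcases lt_or_ge u (-1) with hm | hm
    · exact hm.trans_le (Real.neg_one_le_cos θ)
    rcases lt_or_ge 1 u with h1 | h1
    · rw [Real.arccos_eq_zero.mpr h1.le] at hA
      exact absurd h0 (by linarith)
    have := Real.strictAntiOn_cos ⟨h0.le, (hA.trans_le (Real.arccos_le_pi u)).le⟩
      ⟨Real.arccos_nonneg u, Real.arccos_le_pi u⟩ hA
    rwa [Real.cos_arccos hm h1] at this

lemma continuous_antideriv (t lam c : ℝ) :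
    Continuous (fun y : ℝ => -Real.exp (-(lam * t) + (lam / c) * Real.sqrt (c ^ 2 * t ^ 2 - y ^ 2))) := by
  fun_prop

lemma hasDerivAt_antideriv {t lam c : ℝ} (hc : 0 < c) {x : ℝ} (hx0 : 0 < x) (hx : x < c * t) :
    HasDerivAt (fun y : ℝ => -Real.exp (-(lam * t) + (lam / c) * Real.sqrt (c ^ 2 * t ^ 2 - y ^ 2)))
      (facAux t lam c x) x := by
  have hq : 0 < c ^ 2 * t ^ 2 - x ^ 2 := by nlinarith
  have h1 : HasDerivAt (fun y : ℝ => c ^ 2 * t ^ 2 - y ^ 2) (-(2 * x)) x := by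
    simpa using (hasDerivAt_pow 2 x).const_sub (c ^ 2 * t ^ 2)
  have h2 := (h1.sqrt (ne_of_gt hq)).const_mul (lam / c)
  have h5 := ((h2.const_add (-(lam * t))).exp).neg
  have hs : Real.sqrt (c ^ 2 * t ^ 2 - x ^ 2) ≠ 0 :=
    ne_of_gt (Real.sqrt_pos.mpr hq)
  have heq : facAux t lam c x
      = -(Real.exp (-(lam * t) + lam / c * Real.sqrt (c ^ 2 * t ^ 2 - x ^ 2)) *
          (lam / c * (-(2 * x) / (2 * Real.sqrt (c ^ 2 * t ^ 2 - x ^ 2))))) := by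
    unfold facAux
    field_simp
  rw [heq]
  exact h5

lemma integrableOn_facAux {t lam c : ℝ} (hl : 0 < lam) (hc : 0 < c) :
    IntegrableOn (facAux t lam c) (Set.Ioo 0 (c * t)) := by
  rw [← integrableOn_Ioc_iff_integrableOn_Ioo]
  refine intervalIntegral.integrableOn_deriv_of_nonneg
    (continuous_antideriv t lam c).continuousOn ?_ ?_
  · intro x hx
    exact hasDerivAt_antideriv hc hx.1 hx.2
  · intro x hx
    have h1 := hx.1
    unfold facAux
    positivity

lemma integrable_fac {t lam c : ℝ} (hl : 0 < lam) (hc : 0 < c) :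
    Integrable (fac t lam c) := by
  rw [fac_eq_indicator]
  rw [integrable_indicator_iff measurableSet_Ioo]
  exact integrableOn_facAux hl hc

lemma integral_fac {t lam c : ℝ} (ht : 0 < t) (hl : 0 < lam) (hc : 0 < c)
    {z : ℝ} (hz0 : 0 ≤ z) (hz : z ≤ c * t) :
    ∫ x in (0:ℝ)..z, fac t lam c x
      = 1 - Real.exp (-(lam * t) + (lam / c) * Real.sqrt (c ^ 2 * t ^ 2 - z ^ 2)) := by
  have key := intervalIntegral.integral_eq_sub_of_hasDeriv_right_of_le hz0
    ((continuous_antideriv t lam c).continuousOn)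
    (fun x hx => by
      have hd := hasDerivAt_antideriv (t := t) (lam := lam) hc hx.1 (lt_of_lt_of_le hx.2 hz)
      have : fac t lam c x = facAux t lam c x := by
        rw [fac_eq_indicator, Set.indicator_of_mem (Set.mem_Ioo.mpr ⟨hx.1, lt_of_lt_of_le hx.2 hz⟩)]
      rw [this]
      exact hd.hasDerivWithinAt)
    ((integrable_fac hl hc).intervalIntegrable)
  rw [key]
  have h0 : Real.sqrt (c ^ 2 * t ^ 2 - 0 ^ 2) = c * t := by
    rw [show c ^ 2 * t ^ 2 - 0 ^ 2 = (c * t) ^ 2 by ring, Real.sqrt_sq (by positivity)]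
  rw [h0]
  have : -(lam * t) + lam / c * (c * t) = 0 := by field_simp; ring
  rw [this, Real.exp_zero]
  ring

theorem joint_prob_first_switched_large_r {Ω : Type*} [MeasureSpace Ω] [IsProbabilityMeasure (ℙ : Measure Ω)]
    (t l1 l2 c1 c2 : ℝ) (ht : 0 < t) (hl1 : 0 < l1) (hl2 : 0 < l2)
    (hc2 : 0 < c2) (hc12 : c2 ≤ c1)
    (R1 R2 Θ : Ω → ℝ) (hmR1 : Measurable R1) (hmR2 : Measurable R2) (hmΘ : Measurable Θ)
    (hind : iIndepFun ![R1, R2, Θ] ℙ)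
    (hR1 : Measure.map R1 ℙ = flightLaw t l1 c1)
    (hR2 : Measure.map R2 ℙ = flightLaw t l2 c2)
    (hΘ : Measure.map Θ ℙ = uniformMeasure (Set.Ioo 0 Real.pi))
    (r : ℝ) (hr0 : c2 * t < r) (hr : r ≤ (c1 + c2) * t) :
    ℙ {ω | rho R1 R2 Θ ω < r ∧ R1 ω < c1 * t ∧ R2 ω = c2 * t}
      = ENNReal.ofReal
          (Real.exp (-(l2 * t)) *
              (1 - Real.exp (-(l1 * t) +
                (l1 / c1) * Real.sqrt (c1 ^ 2 * t ^ 2 - (r - c2 * t) ^ 2)))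
            + l1 * Real.exp (-((l1 + l2) * t)) / (Real.pi * c1) *
              (∫ ξ in (r - c2 * t)..(min (c2 * t + r) (c1 * t)),
              Real.arccos ((ξ ^ 2 + (c2 * t) ^ 2 - r ^ 2) / (2 * (c2 * t) * ξ)) *
                (ξ / Real.sqrt (c1 ^ 2 * t ^ 2 - ξ ^ 2)) *
                Real.exp ((l1 / c1) * Real.sqrt (c1 ^ 2 * t ^ 2 - ξ ^ 2)))) := by
  have hc1 : 0 < c1 := lt_of_lt_of_le hc2 hc12
  have ha : 0 < c1 * t := mul_pos hc1 ht
  have hb : 0 < c2 * t := mul_pos hc2 ht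
  have hrpos : 0 < r := hb.trans hr0
  have hz1 : 0 < r - c2 * t := sub_pos.mpr hr0
  have hz1a : r - c2 * t ≤ c1 * t := by nlinarith
  set ν := uniformMeasure (Set.Ioo 0 Real.pi) with hν
  haveI hsf2 : SFinite (flightLaw t l2 c2) := by unfold flightLaw; infer_instance
  haveI hsfν : SFinite ν := by rw [hν]; unfold uniformMeasure; infer_instance
  set S : Set (ℝ × ℝ × ℝ) :=
    {p | Real.sqrt (p.1 ^ 2 + p.2.1 ^ 2 - 2 * p.1 * p.2.1 * Real.cos p.2.2) < r ∧
      p.1 < c1 * t ∧ p.2.1 = c2 * t} with hSdef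
  have hSm : MeasurableSet S := by
    have h1 : MeasurableSet {p : ℝ × ℝ × ℝ |
        Real.sqrt (p.1 ^ 2 + p.2.1 ^ 2 - 2 * p.1 * p.2.1 * Real.cos p.2.2) < r} :=
      measurableSet_lt (by fun_prop) measurable_const
    have h2 : MeasurableSet {p : ℝ × ℝ × ℝ | p.1 < c1 * t} :=
      measurableSet_lt measurable_fst measurable_const
    have h3 : MeasurableSet {p : ℝ × ℝ × ℝ | p.2.1 = c2 * t} :=
      (measurable_fst.comp measurable_snd) (measurableSet_singleton (c2 * t))
    rw [hSdef, Set.setOf_and, Set.setOf_and]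
    exact h1.inter (h2.inter h3)
  have hφ : Measurable (fun ω => (R1 ω, R2 ω, Θ ω)) := hmR1.prodMk (hmR2.prodMk hmΘ)
  have hev : {ω | rho R1 R2 Θ ω < r ∧ R1 ω < c1 * t ∧ R2 ω = c2 * t}
      = (fun ω => (R1 ω, R2 ω, Θ ω)) ⁻¹' S := rfl
  have h23 : IndepFun R2 Θ ℙ := by
    have h := hind.indepFun (show (1 : Fin 3) ≠ 2 by decide)
    simpa using h
  have h123 : IndepFun R1 (fun ω => (R2 ω, Θ ω)) ℙ := by
    have h := (hind.indepFun_prodMk (fun i => by fin_cases i <;> simpa) 1 2 0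
      (by decide) (by decide)).symm
    simpa using h
  have hmap23 : Measure.map (fun ω => (R2 ω, Θ ω)) ℙ = (flightLaw t l2 c2).prod ν := by
    rw [← hR2, ← hΘ]
    exact (indepFun_iff_map_prod_eq_prod_map_map hmR2.aemeasurable hmΘ.aemeasurable).mp h23
  have hmapAll : Measure.map (fun ω => (R1 ω, R2 ω, Θ ω)) ℙ
      = (flightLaw t l1 c1).prod ((flightLaw t l2 c2).prod ν) := by
    rw [← hR1, ← hmap23]
    exact (indepFun_iff_map_prod_eq_prod_map_map hmR1.aemeasurable
      (hmR2.prodMk hmΘ).aemeasurable).mp h123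
  have step1 : ℙ {ω | rho R1 R2 Θ ω < r ∧ R1 ω < c1 * t ∧ R2 ω = c2 * t}
      = ((flightLaw t l1 c1).prod ((flightLaw t l2 c2).prod ν)) S := by
    rw [hev, ← Measure.map_apply hφ hSm, hmapAll]
  set T : ℝ → Set ℝ := fun x => {θ : ℝ |
      Real.sqrt (x ^ 2 + (c2 * t) ^ 2 - 2 * x * (c2 * t) * Real.cos θ) < r ∧ x < c1 * t}
    with hT
  set u : ℝ → ℝ := fun x => (x ^ 2 + (c2 * t) ^ 2 - r ^ 2) / (2 * (c2 * t) * x) with hu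
  set F : ℝ → ℝ := fun x => fac t l1 c1 x * (Real.arccos (u x) / Real.pi) with hF
  have hsec : ∀ x : ℝ, Prod.mk x ⁻¹' S = {(c2 * t)} ×ˢ T x := by
    intro x
    ext q
    obtain ⟨y, θ⟩ := q
    simp only [hSdef, hT, Set.mem_preimage, Set.mem_setOf_eq, Set.mem_prod,
      Set.mem_singleton_iff]
    constructor
    · rintro ⟨h1, h2, h3⟩; subst h3; exact ⟨rfl, h1, h2⟩
    · rintro ⟨h3, h1, h2⟩; subst h3; exact ⟨h1, h2, rfl⟩
  have hflight2_singleton : flightLaw t l2 c2 {c2 * t}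
      = ENNReal.ofReal (Real.exp (-(l2 * t))) := by
    unfold flightLaw
    rw [Measure.add_apply, Measure.smul_apply, smul_eq_mul,
      Measure.dirac_apply_of_mem (show c2 * t ∈ ({c2 * t} : Set ℝ) from rfl),
      withDensity_apply _ (measurableSet_singleton _),
      setLIntegral_measure_zero _ _ (Real.volume_singleton), mul_one, add_zero]
  have hsecval : ∀ x : ℝ, ((flightLaw t l2 c2).prod ν) (Prod.mk x ⁻¹' S)
      = ENNReal.ofReal (Real.exp (-(l2 * t))) * ν (T x) := by
    intro x
    rw [hsec x, Measure.prod_prod, hflight2_singleton]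
  have hνT : ∀ x : ℝ, 0 < x → x < c1 * t →
      ν (T x) = ENNReal.ofReal Real.pi⁻¹ * ENNReal.ofReal (Real.arccos (u x)) := by
    intro x hx0 hx1
    have h2bx : (0:ℝ) < 2 * (c2 * t) * x := by positivity
    have hTeq : T x = {θ : ℝ | u x < Real.cos θ} := by
      ext θ
      simp only [hT, hu, Set.mem_setOf_eq, and_iff_left hx1]
      rw [Real.sqrt_lt' hrpos, div_lt_iff₀ h2bx]
      constructor <;> intro h <;> nlinarith
    rw [hν]
    unfold uniformMeasure
    rw [Measure.smul_apply, smul_eq_mul, Measure.restrict_apply' measurableSet_Ioo,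
      hTeq, Set.inter_comm, cosSet_eq, Real.volume_Ioo, Real.volume_Ioo, sub_zero, sub_zero,
      ENNReal.ofReal_inv_of_pos Real.pi_pos]
  have hpoint : ∀ x : ℝ, ENNReal.ofReal (fac t l1 c1 x) * ν (T x) = ENNReal.ofReal (F x) := by
    intro x
    by_cases hx : 0 < x ∧ x < c1 * t
    · rw [hνT x hx.1 hx.2, hF]
      rw [← ENNReal.ofReal_mul (by positivity), ← ENNReal.ofReal_mul (fac_nonneg t hl1 hc1 x)]
      congr 1
      show _ = fac t l1 c1 x * (Real.arccos (u x) / Real.pi)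
      rw [div_eq_mul_inv]
      ring
    · have hfz : fac t l1 c1 x = 0 := by rw [fac]; exact if_neg hx
      simp [hF, hfz]
  have hdiracT : T (c1 * t) = ∅ := by
    ext θ; simp [hT, lt_irrefl]
  have hstep2 : ((flightLaw t l1 c1).prod ((flightLaw t l2 c2).prod ν)) S
      = ENNReal.ofReal (Real.exp (-(l2 * t))) * ∫⁻ x, ν (T x) ∂(flightLaw t l1 c1) := by
    rw [Measure.prod_apply hSm]
    rw [show (fun x => ((flightLaw t l2 c2).prod ν) (Prod.mk x ⁻¹' S))
        = fun x => ENNReal.ofReal (Real.exp (-(l2 * t))) * ν (T x) from funext hsecval]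
    exact lintegral_const_mul' _ _ ENNReal.ofReal_ne_top
  have hstep3 : ∫⁻ x, ν (T x) ∂(flightLaw t l1 c1) = ∫⁻ x, ENNReal.ofReal (F x) := by
    unfold flightLaw
    rw [lintegral_add_measure, lintegral_smul_measure, lintegral_dirac, hdiracT]
    simp only [measure_empty, mul_zero, smul_zero, zero_add]
    rw [lintegral_withDensity_eq_lintegral_mul_non_measurable _
      ((measurable_fac t l1 c1).ennreal_ofReal)
      (Filter.Eventually.of_forall fun x => ENNReal.ofReal_lt_top)]
    refine lintegral_congr fun x => ?_
    rw [Pi.mul_apply]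
    exact hpoint x
  have hFmeas : Measurable F := by
    rw [hF]
    exact (measurable_fac t l1 c1).mul
      ((Real.measurable_arccos.comp (by rw [hu]; fun_prop)).div_const Real.pi)
  have hFnonneg : ∀ x, 0 ≤ F x := fun x => by
    rw [hF]
    exact mul_nonneg (fac_nonneg t hl1 hc1 x)
      (div_nonneg (Real.arccos_nonneg _) Real.pi_pos.le)
  have hFle : ∀ x, ‖F x‖ ≤ ‖fac t l1 c1 x‖ := by
    intro x
    rw [Real.norm_of_nonneg (hFnonneg x), Real.norm_of_nonneg (fac_nonneg t hl1 hc1 x)]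
    have h1 : Real.arccos (u x) / Real.pi ≤ 1 := by
      rw [div_le_one Real.pi_pos]
      exact Real.arccos_le_pi _
    calc F x ≤ fac t l1 c1 x * 1 :=
          mul_le_mul_of_nonneg_left h1 (fac_nonneg t hl1 hc1 x)
      _ = fac t l1 c1 x := mul_one _
  have hFint : Integrable F :=
    (integrable_fac hl1 hc1).mono hFmeas.aestronglyMeasurable
      (Filter.Eventually.of_forall hFle)
  have hstep4 : ∫⁻ x, ENNReal.ofReal (F x) = ENNReal.ofReal (∫ x, F x) :=
    (ofReal_integral_eq_lintegral_ofReal hFint (Filter.Eventually.of_forall hFnonneg)).symm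
  set β := min (c2 * t + r) (c1 * t) with hβ
  have hz1β : r - c2 * t ≤ β := le_min (by linarith) hz1a
  have hβa : β ≤ c1 * t := min_le_right _ _
  have hFind : F = (Set.Ioo 0 (c1 * t)).indicator F := by
    funext x
    by_cases hx : x ∈ Set.Ioo 0 (c1 * t)
    · rw [Set.indicator_of_mem hx]
    · rw [Set.indicator_of_notMem hx]
      have hfz : fac t l1 c1 x = 0 := by
        rw [fac]; exact if_neg (by simpa [Set.mem_Ioo] using hx)
      simp [hF, hfz]
  have hIoo : ∫ x, F x = ∫ x in (0:ℝ)..(c1 * t), F x := by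
    conv_lhs => rw [hFind]
    rw [integral_indicator measurableSet_Ioo, ← integral_Ioc_eq_integral_Ioo,
      ← intervalIntegral.integral_of_le ha.le]
  have hii : ∀ p q : ℝ, IntervalIntegrable F volume p q := fun p q =>
    hFint.intervalIntegrable
  have hsplit1 : ∫ x in (0:ℝ)..(c1 * t), F x
      = (∫ x in (0:ℝ)..(r - c2 * t), F x) + ∫ x in (r - c2 * t)..(c1 * t), F x :=
    (intervalIntegral.integral_add_adjacent_intervals (hii _ _) (hii _ _)).symm
  have hsplit2 : ∫ x in (r - c2 * t)..(c1 * t), F x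
      = (∫ x in (r - c2 * t)..β, F x) + ∫ x in β..(c1 * t), F x :=
    (intervalIntegral.integral_add_adjacent_intervals (hii _ _) (hii _ _)).symm
  have hpiece1 : ∫ x in (0:ℝ)..(r - c2 * t), F x
      = 1 - Real.exp (-(l1 * t) + (l1 / c1) * Real.sqrt (c1 ^ 2 * t ^ 2 - (r - c2 * t) ^ 2)) := by
    have hcongr : Set.EqOn F (fac t l1 c1) (Set.uIcc 0 (r - c2 * t)) := by
      intro x hx
      rw [Set.uIcc_of_le hz1.le] at hx
      rcases eq_or_lt_of_le hx.1 with h0 | h0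
      · have hfz : fac t l1 c1 x = 0 := by
          rw [fac]; exact if_neg (by rw [← h0]; simp)
        simp [hF, hfz]
      · have hub : u x ≤ -1 := by
          rw [hu]
          rw [div_le_iff₀ (by positivity : (0:ℝ) < 2 * (c2 * t) * x)]
          nlinarith [hx.2]
        simp only [hF]
        rw [Real.arccos_eq_pi.mpr hub, div_self (ne_of_gt Real.pi_pos), mul_one]
    rw [intervalIntegral.integral_congr hcongr]
    exact integral_fac ht hl1 hc1 hz1.le hz1a
  have hpiece3 : ∫ x in β..(c1 * t), F x = 0 := by
    have hcongr : Set.EqOn F (fun _ => (0:ℝ)) (Set.uIcc β (c1 * t)) := by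
      intro x hx
      rw [Set.uIcc_of_le hβa] at hx
      rcases le_or_gt (c2 * t + r) x with hbr | hbr
      · have hx0 : 0 < x := lt_of_lt_of_le (by linarith) hbr
        have hu1 : 1 ≤ u x := by
          rw [hu]
          rw [le_div_iff₀ (by positivity : (0:ℝ) < 2 * (c2 * t) * x)]
          nlinarith
        simp only [hF]
        rw [Real.arccos_eq_zero.mpr hu1]
        simp
      · have hxeq : x = c1 * t := by
          rcases min_cases (c2 * t + r) (c1 * t) with ⟨h1, _⟩ | ⟨h1, _⟩
          · exact absurd (lt_of_le_of_lt (h1 ▸ hx.1) hbr) (lt_irrefl _)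
          · exact le_antisymm hx.2 (h1 ▸ hx.1)
        have hfz : fac t l1 c1 x = 0 := by
          rw [fac]; refine if_neg ?_; rw [hxeq]; simp
        simp [hF, hfz]
    rw [intervalIntegral.integral_congr hcongr]
    simp
  set C0 := l1 * Real.exp (-(l1 * t)) / (Real.pi * c1) with hC0
  set I : ℝ → ℝ := fun ξ =>
    Real.arccos ((ξ ^ 2 + (c2 * t) ^ 2 - r ^ 2) / (2 * (c2 * t) * ξ)) *
      (ξ / Real.sqrt (c1 ^ 2 * t ^ 2 - ξ ^ 2)) *
      Real.exp ((l1 / c1) * Real.sqrt (c1 ^ 2 * t ^ 2 - ξ ^ 2)) with hI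
  have hpiece2 : ∫ x in (r - c2 * t)..β, F x = C0 * ∫ x in (r - c2 * t)..β, I x := by
    rw [← intervalIntegral.integral_const_mul]
    apply intervalIntegral.integral_congr
    intro x hx
    rw [Set.uIcc_of_le hz1β] at hx
    have hx0 : 0 < x := lt_of_lt_of_le hz1 hx.1
    rcases lt_or_eq_of_le (hx.2.trans hβa) with hxa | hxa
    · have hq : 0 < c1 ^ 2 * t ^ 2 - x ^ 2 := by nlinarith
      have hsq : Real.sqrt (c1 ^ 2 * t ^ 2 - x ^ 2) ≠ 0 :=
        ne_of_gt (Real.sqrt_pos.mpr hq)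
      have hπ : Real.pi ≠ 0 := ne_of_gt Real.pi_pos
      have hc1' : c1 ≠ 0 := ne_of_gt hc1
      simp only [hF, hI, hC0, hu]
      rw [fac, if_pos ⟨hx0, hxa⟩, Real.exp_add]
      field_simp
    · have h0 : Real.sqrt (c1 ^ 2 * t ^ 2 - x ^ 2) = 0 := by
        rw [hxa, show c1 ^ 2 * t ^ 2 - (c1 * t) ^ 2 = 0 by ring, Real.sqrt_zero]
      have hfz : fac t l1 c1 x = 0 := by
        rw [fac]; refine if_neg ?_; rw [hxa]; simp
      simp [hF, hI, hfz, h0]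
  have hexp : Real.exp (-(l2 * t)) * C0
      = l1 * Real.exp (-((l1 + l2) * t)) / (Real.pi * c1) := by
    rw [hC0, show Real.exp (-(l2 * t)) * (l1 * Real.exp (-(l1 * t)) / (Real.pi * c1))
      = l1 * (Real.exp (-(l2 * t)) * Real.exp (-(l1 * t))) / (Real.pi * c1) by ring,
      ← Real.exp_add, show -(l2 * t) + -(l1 * t) = -((l1 + l2) * t) by ring]
  rw [step1, hstep2, hstep3, hstep4, ← ENNReal.ofReal_mul (Real.exp_nonneg _)]
  congr 1
  rw [hIoo, hsplit1, hsplit2, hpiece1, hpiece2, hpiece3, add_zero]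
  rw [mul_add, ← mul_assoc, hexp]
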